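/- Let D = (n, ι, P) be a finite Markov chain with target set T ⊆ Fin n and let w ∉ T be a state such that every hitting path from ι to T with nonzero mass contains w. Then Pr_{D,ι}(◇T) = Pr_{D,ι}(◇{w}) · Pr_{D,w}(◇T). -/

import Mathlib

/-- A finite path in state space `S`: a length `m` together with `m + 1` states. -/
abbrev MCPath (S : Type) : Type := Σ m : ℕ, Fin (m + 1) → S

/-- The mass of a path: the product of the transition probabilities along it. -/
def pathMass {S : Type} (P : S → S → ℝ) (π : MCPath S) : ℝ :=
  ∏ i : Fin π.1, P (π.2 i.castSucc) (π.2 i.succ)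

/-- A hitting path from `s` to `T`: it starts in `s`, ends in `T`, and no proper prefix
visits `T`. -/
def IsHitting {S : Type} (T : Set S) (s : S) (π : MCPath S) : Prop :=
  π.2 0 = s ∧ π.2 (Fin.last π.1) ∈ T ∧ ∀ i : Fin π.1, π.2 i.castSucc ∉ T

/-- The reachability probability `Pr_{P,s}(◇T)`: the sum of the masses of all hitting
paths from `s` to `T`. -/
noncomputable def reachProb {S : Type} (P : S → S → ℝ) (T : Set S) (s : S) : ℝ :=
  ∑' π : {π : MCPath S // IsHitting T s π}, pathMass P π.1

namespace MCAux

open Function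
open scoped ENNReal

/-- The mass of a path, computed in `ℝ≥0∞`. -/
noncomputable def emass {S : Type} (P : S → S → ℝ) (π : MCPath S) : ℝ≥0∞ :=
  ∏ i : Fin π.1, ENNReal.ofReal (P (π.2 i.castSucc) (π.2 i.succ))

lemma emass_eq {S : Type} (P : S → S → ℝ) (hpos : ∀ s s', 0 ≤ P s s') (π : MCPath S) :
    emass P π = ENNReal.ofReal (pathMass P π) := by
  simp only [pathMass]
  rw [ENNReal.ofReal_prod_of_nonneg (fun i _ => hpos _ _)]; rfl

lemma tsum_toReal {α : Type*} (f : α → ℝ) (h : ∀ a, 0 ≤ f a) :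
    ∑' a, f a = (∑' a, ENNReal.ofReal (f a)).toReal := by
  by_cases hs : Summable f
  · rw [← ENNReal.ofReal_tsum_of_nonneg h hs, ENNReal.toReal_ofReal (tsum_nonneg h)]
  · rw [tsum_eq_zero_of_not_summable hs]
    by_cases hinf : ∑' a, ENNReal.ofReal (f a) = ∞
    · rw [hinf]; simp
    · exfalso
      have := ENNReal.summable_toReal hinf
      apply hs
      refine this.congr fun a => ?_
      rw [ENNReal.toReal_ofReal (h a)]

lemma reachProb_eq {S : Type} (P : S → S → ℝ) (hpos : ∀ s s', 0 ≤ P s s')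
    (T : Set S) (s : S) :
    reachProb P T s = (∑' π : {π : MCPath S // IsHitting T s π}, emass P π.1).toReal := by
  rw [reachProb, tsum_toReal (fun π : {π : MCPath S // IsHitting T s π} => pathMass P π.1)
    (fun π => Finset.prod_nonneg fun i _ => hpos _ _)]
  congr 1
  exact tsum_congr fun π => (emass_eq P hpos π.1).symm

/-- Concatenation of two paths (assuming the first ends where the second starts). -/
@[reducible] def concat {S : Type} (π₁ π₂ : MCPath S) : MCPath S :=
  ⟨π₁.1 + π₂.1, fun i =>
    if h : (i : ℕ) ≤ π₁.1 then π₁.2 ⟨i, by omega⟩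
    else π₂.2 ⟨(i : ℕ) - π₁.1, by have := i.isLt; omega⟩⟩

lemma concat_fst {S : Type} (π₁ π₂ : MCPath S) : (concat π₁ π₂).1 = π₁.1 + π₂.1 := rfl

lemma concat_apply_le {S : Type} (π₁ π₂ : MCPath S) (i : Fin (π₁.1 + π₂.1 + 1))
    (h : (i : ℕ) ≤ π₁.1) : (concat π₁ π₂).2 i = π₁.2 ⟨i, by omega⟩ := by
  simp [concat, h]

lemma concat_apply_gt {S : Type} (π₁ π₂ : MCPath S) (i : Fin (π₁.1 + π₂.1 + 1))
    (h : π₁.1 < (i : ℕ)) :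
    (concat π₁ π₂).2 i = π₂.2 ⟨(i : ℕ) - π₁.1, by have := i.isLt; omega⟩ := by
  simp [concat, Nat.not_le.mpr h]

lemma emass_concat {S : Type} (P : S → S → ℝ) (π₁ π₂ : MCPath S)
    (hj : π₁.2 (Fin.last π₁.1) = π₂.2 0) :
    emass P (concat π₁ π₂) = emass P π₁ * emass P π₂ := by
  simp only [emass, concat_fst]
  rw [Fin.prod_univ_add]
  congr 1
  · apply Finset.prod_congr rfl
    intro i _
    have h1 : (concat π₁ π₂).2 (Fin.castSucc (Fin.castAdd π₂.1 i)) = π₁.2 i.castSucc := by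
      rw [concat_apply_le _ _ _ (by
        simp only [Fin.coe_castSucc, Fin.coe_castAdd]; omega)]
      exact congrArg _ (Fin.ext (by simp))
    have h2 : (concat π₁ π₂).2 (Fin.succ (Fin.castAdd π₂.1 i)) = π₁.2 i.succ := by
      rw [concat_apply_le _ _ _ (by
        simp only [Fin.val_succ, Fin.coe_castAdd]; omega)]
      exact congrArg _ (Fin.ext (by simp))
    exact congrArg ENNReal.ofReal (congrArg₂ P h1 h2)
  · apply Finset.prod_congr rfl
    intro i _
    have h2 : (concat π₁ π₂).2 (Fin.succ (Fin.natAdd π₁.1 i)) = π₂.2 i.succ := by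
      rw [concat_apply_gt _ _ _ (by
        simp only [Fin.val_succ, Fin.coe_natAdd]; omega)]
      exact congrArg _ (Fin.ext (by
        simp only [Fin.val_succ, Fin.coe_natAdd]; omega))
    have h1 : (concat π₁ π₂).2 (Fin.castSucc (Fin.natAdd π₁.1 i)) = π₂.2 i.castSucc := by
      by_cases h0 : (i : ℕ) = 0
      · rw [concat_apply_le _ _ _ (by
          simp only [Fin.coe_castSucc, Fin.coe_natAdd]; omega)]
        have e1 : (⟨((Fin.castSucc (Fin.natAdd π₁.1 i) : Fin _) : ℕ), by
            simp only [Fin.coe_castSucc, Fin.coe_natAdd]; omega⟩ : Fin (π₁.1 + 1))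
            = Fin.last π₁.1 := Fin.ext (by
          simp only [Fin.coe_castSucc, Fin.coe_natAdd, Fin.val_last]; omega)
        rw [e1, hj]
        exact congrArg _ (Fin.ext (by
          simp only [Fin.val_zero, Fin.coe_castSucc]; omega))
      · rw [concat_apply_gt _ _ _ (by
          simp only [Fin.coe_castSucc, Fin.coe_natAdd]; omega)]
        exact congrArg _ (Fin.ext (by
          simp only [Fin.coe_castSucc, Fin.coe_natAdd]; omega))
    exact congrArg ENNReal.ofReal (congrArg₂ P h1 h2)

/-- Prefix of a path. -/
@[reducible] def take {S : Type} (π : MCPath S) (k : ℕ) (hk : k ≤ π.1) : MCPath S :=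
  ⟨k, fun i => π.2 ⟨i, by have := i.isLt; omega⟩⟩

/-- Suffix of a path. -/
@[reducible] def drop {S : Type} (π : MCPath S) (k : ℕ) (hk : k ≤ π.1) : MCPath S :=
  ⟨π.1 - k, fun i => π.2 ⟨k + i, by have := i.isLt; omega⟩⟩

lemma take_apply {S : Type} (π : MCPath S) (k : ℕ) (hk : k ≤ π.1) (i : Fin (k + 1)) :
    (take π k hk).2 i = π.2 ⟨i, by have := i.isLt; omega⟩ := rfl

lemma drop_apply {S : Type} (π : MCPath S) (k : ℕ) (hk : k ≤ π.1) (i : Fin (π.1 - k + 1)) :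
    (drop π k hk).2 i = π.2 ⟨k + i, by have := i.isLt; omega⟩ := rfl

lemma concat_take_drop {S : Type} (π : MCPath S) (k : ℕ) (hk : k ≤ π.1) :
    concat (take π k hk) (drop π k hk) = π := by
  have hlen : (concat (take π k hk) (drop π k hk)).1 = π.1 := by
    simp only [concat_fst, take, drop]; omega
  refine Sigma.ext hlen ?_
  refine (Fin.heq_fun_iff (by rw [hlen])).mpr ?_
  intro i
  have hi : (i : ℕ) < k + (π.1 - k) + 1 := i.isLt
  have ht : (take π k hk).1 = k := rfl
  have hd : (drop π k hk).1 = π.1 - k := rfl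
  by_cases h : (i : ℕ) ≤ k
  · rw [concat_apply_le _ _ _ h, take_apply]
  · rw [concat_apply_gt _ _ _ (by omega), drop_apply]
    exact congrArg _ (Fin.ext (by
      simp only [Fin.val_mk, Fin.coe_cast]; omega))

lemma sigma_apply_eq {S : Type} {π π' : MCPath S} (h : π = π') (j : ℕ) (hj : j < π.1 + 1) :
    π.2 ⟨j, hj⟩ = π'.2 ⟨j, by rw [← h]; exact hj⟩ := by subst h; rfl

lemma pathMass_ne_zero_iff {S : Type} (P : S → S → ℝ) (π : MCPath S) :
    pathMass P π ≠ 0 ↔ ∀ i : Fin π.1, P (π.2 i.castSucc) (π.2 i.succ) ≠ 0 := by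
  simp [pathMass, Finset.prod_ne_zero_iff]

lemma pathMass_take_ne_zero {S : Type} (P : S → S → ℝ) (π : MCPath S)
    (h : pathMass P π ≠ 0) (k : ℕ) (hk : k ≤ π.1) : pathMass P (take π k hk) ≠ 0 := by
  rw [pathMass_ne_zero_iff] at h ⊢
  intro i
  have hik : (i : ℕ) < k := i.isLt
  have h1 : (take π k hk).2 i.castSucc = π.2 (Fin.castSucc ⟨i, by omega⟩) := by
    rw [take_apply]; exact congrArg _ (Fin.ext (by simp))
  have h2 : (take π k hk).2 i.succ = π.2 (Fin.succ ⟨i, by omega⟩) := by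
    rw [take_apply]; exact congrArg _ (Fin.ext (by simp))
  rw [h1, h2]
  exact h _

lemma pathMass_drop_ne_zero {S : Type} (P : S → S → ℝ) (π : MCPath S)
    (h : pathMass P π ≠ 0) (k : ℕ) (hk : k ≤ π.1) : pathMass P (drop π k hk) ≠ 0 := by
  rw [pathMass_ne_zero_iff] at h ⊢
  intro i
  have hik : (i : ℕ) < π.1 - k := i.isLt
  have h1 : (drop π k hk).2 i.castSucc = π.2 (Fin.castSucc ⟨k + i, by omega⟩) := by
    rw [drop_apply]; exact congrArg _ (Fin.ext (by simp))
  have h2 : (drop π k hk).2 i.succ = π.2 (Fin.succ ⟨k + i, by omega⟩) := by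
    rw [drop_apply]; exact congrArg _ (Fin.ext (by simp [Fin.succ]; omega))
  rw [h1, h2]
  exact h _

lemma emass_ne_zero_iff {S : Type} (P : S → S → ℝ) (hpos : ∀ s s', 0 ≤ P s s')
    (π : MCPath S) : emass P π ≠ 0 ↔ pathMass P π ≠ 0 := by
  rw [emass_eq P hpos]
  have hnn : 0 ≤ pathMass P π := Finset.prod_nonneg fun i _ => hpos _ _
  constructor
  · intro h h0; rw [h0] at h; simp at h
  · intro h
    rw [ne_eq, ENNReal.ofReal_eq_zero, not_le]
    exact lt_of_le_of_ne hnn (Ne.symm h)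

section Main

variable {n : ℕ} (ι : Fin n) (P : Fin n → Fin n → ℝ) (T : Set (Fin n)) (w : Fin n)

lemma avoid_aux (hw : w ∉ T)
    (hthrough : ∀ π : MCPath (Fin n), IsHitting T ι π → pathMass P π ≠ 0 →
      ∃ i : Fin (π.1 + 1), π.2 i = w)
    (a : MCPath (Fin n)) (ha : IsHitting {w} ι a) (hm : pathMass P a ≠ 0) :
    ∀ j : Fin (a.1 + 1), a.2 j ∉ T := by
  classical
  intro j hjT
  have hex : ∃ m, ∃ h : m < a.1 + 1, a.2 ⟨m, h⟩ ∈ T :=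
    ⟨j, j.isLt, by rwa [show (⟨(j : ℕ), j.isLt⟩ : Fin (a.1 + 1)) = j from Fin.ext rfl]⟩
  obtain ⟨hk1, hk2⟩ := Nat.find_spec hex
  set k := Nat.find hex with hkdef
  have hmin : ∀ m, m < k → ¬ ∃ h : m < a.1 + 1, a.2 ⟨m, h⟩ ∈ T :=
    fun m hm' => Nat.find_min hex hm'
  have hklt : k < a.1 := by
    rcases Nat.lt_or_ge k a.1 with h | h
    · exact h
    · exfalso
      have hke : k = a.1 := by omega
      apply hw
      have hlast : a.2 ⟨k, hk1⟩ = w := by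
        rw [show (⟨k, hk1⟩ : Fin (a.1 + 1)) = Fin.last a.1 from Fin.ext (by simp [hke])]
        exact ha.2.1
      rwa [hlast] at hk2
  have hkle : k ≤ a.1 := le_of_lt hklt
  have hhit : IsHitting T ι (take a k hkle) := by
    refine ⟨?_, ?_, ?_⟩
    · rw [take_apply]
      exact (congrArg a.2 (Fin.ext (by simp))).trans ha.1
    · rw [take_apply]
      exact (congrArg a.2 (Fin.ext rfl) : a.2 _ = a.2 ⟨k, hk1⟩) ▸ hk2
    · intro i hiT
      have hik : (i : ℕ) < k := i.isLt
      rw [take_apply] at hiT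
      exact hmin (i : ℕ) hik ⟨by omega,
        by rwa [show (⟨(i : ℕ), by omega⟩ : Fin (a.1 + 1)) =
          ⟨((i.castSucc : Fin (k + 1)) : ℕ), by
            have h1 : ((i.castSucc : Fin (k + 1)) : ℕ) = (i : ℕ) := rfl; omega⟩
          from Fin.ext rfl]⟩
  obtain ⟨i0, hi0⟩ := hthrough _ hhit (pathMass_take_ne_zero P a hm k hkle)
  rw [take_apply] at hi0
  have hti : (take a k hkle).1 = k := rfl
  have hi0le : (i0 : ℕ) ≤ k := by have := i0.isLt; omega
  have := ha.2.2 ⟨(i0 : ℕ), by omega⟩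
  apply this
  rw [Set.mem_singleton_iff]
  exact (congrArg a.2 (Fin.ext (by simp))).trans hi0

lemma concat_hitting (hw : w ∉ T) (a b : MCPath (Fin n)) (ha : IsHitting {w} ι a)
    (hb : IsHitting T w b) (havoid : ∀ j : Fin (a.1 + 1), a.2 j ∉ T) :
    IsHitting T ι (concat a b) := by
  have hb1 : 0 < b.1 := by
    rcases Nat.eq_zero_or_pos b.1 with h | h
    · exfalso
      apply hw
      have h0 : (Fin.last b.1) = (0 : Fin (b.1 + 1)) := Fin.ext (by simp [h])
      have hend := hb.2.1
      rwa [h0, hb.1] at hend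
    · exact h
  refine ⟨?_, ?_, ?_⟩
  · rw [concat_apply_le a b 0 (by simp)]
    exact (congrArg a.2 (Fin.ext (by simp))).trans ha.1
  · show (concat a b).2 (Fin.last (a.1 + b.1)) ∈ T
    rw [concat_apply_gt a b (Fin.last _) (by
      show a.1 < ((Fin.last (a.1 + b.1) : Fin (a.1 + b.1 + 1)) : ℕ); simp; omega)]
    convert hb.2.1 using 2
    exact Fin.ext (by show a.1 + b.1 - a.1 = b.1; omega)
  · intro i
    have hi : (i : ℕ) < a.1 + b.1 := i.isLt
    by_cases h : ((i.castSucc : Fin (a.1 + b.1 + 1)) : ℕ) ≤ a.1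
    · rw [concat_apply_le a b _ h]
      exact havoid _
    · rw [concat_apply_gt a b _ (by omega)]
      have hic : ((i.castSucc : Fin (a.1 + b.1 + 1)) : ℕ) = (i : ℕ) := rfl
      have := hb.2.2 ⟨(i : ℕ) - a.1, by omega⟩
      rwa [show (Fin.castSucc (⟨(i : ℕ) - a.1, by omega⟩ : Fin b.1)) =
        (⟨((i.castSucc : Fin (a.1 + b.1 + 1)) : ℕ) - a.1, by omega⟩ : Fin (b.1 + 1)) from
        Fin.ext (by simp)] at this

lemma exists_split (π : MCPath (Fin n)) (hπ : IsHitting T ι π)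
    (hex : ∃ i : Fin (π.1 + 1), π.2 i = w) :
    ∃ (k : ℕ) (hk : k ≤ π.1), IsHitting {w} ι (take π k hk) ∧ IsHitting T w (drop π k hk) := by
  classical
  obtain ⟨i0, hi0⟩ := hex
  have hex' : ∃ m, ∃ h : m < π.1 + 1, π.2 ⟨m, h⟩ = w :=
    ⟨i0, i0.isLt, by rwa [show (⟨(i0 : ℕ), i0.isLt⟩ : Fin (π.1 + 1)) = i0 from Fin.ext rfl]⟩
  obtain ⟨hk1, hk2⟩ := Nat.find_spec hex'
  set k := Nat.find hex' with hkdef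
  have hmin : ∀ m, m < k → ¬ ∃ h : m < π.1 + 1, π.2 ⟨m, h⟩ = w :=
    fun m hm' => Nat.find_min hex' hm'
  have hkle : k ≤ π.1 := by omega
  refine ⟨k, hkle, ⟨?_, ?_, ?_⟩, ⟨?_, ?_, ?_⟩⟩
  · rw [take_apply]
    exact (congrArg π.2 (Fin.ext (by simp))).trans hπ.1
  · rw [take_apply, Set.mem_singleton_iff]
    exact (congrArg π.2 (Fin.ext rfl)).trans hk2
  · intro i hiW
    have hik : (i : ℕ) < k := i.isLt
    rw [take_apply, Set.mem_singleton_iff] at hiW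
    exact hmin (i : ℕ) hik ⟨by omega, (congrArg π.2 (Fin.ext (by simp))).trans hiW⟩
  · rw [drop_apply]
    exact (congrArg π.2 (Fin.ext (by simp [hkdef]))).trans hk2
  · rw [drop_apply]
    have hdd : (drop π k hkle).1 = π.1 - k := rfl
    convert hπ.2.1 using 2
    exact Fin.ext (by simp [Fin.last]; omega)
  · intro i
    have hik : (i : ℕ) < π.1 - k := i.isLt
    rw [drop_apply]
    have := hπ.2.2 ⟨k + (i : ℕ), by omega⟩
    rwa [show (Fin.castSucc (⟨k + (i : ℕ), by omega⟩ : Fin π.1)) =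
      (⟨k + ((i.castSucc : Fin (π.1 - k + 1)) : ℕ), by simp; omega⟩ : Fin (π.1 + 1)) from
      Fin.ext (by simp)] at this

lemma concat_apply_le' {S : Type} (π₁ π₂ : MCPath S) (j : ℕ) (hj : j < π₁.1 + π₂.1 + 1)
    (h : j ≤ π₁.1) : (concat π₁ π₂).2 ⟨j, hj⟩ = π₁.2 ⟨j, by omega⟩ :=
  concat_apply_le _ _ _ h

lemma concat_apply_gt' {S : Type} (π₁ π₂ : MCPath S) (j : ℕ) (hj : j < π₁.1 + π₂.1 + 1)
    (h : π₁.1 < j) : (concat π₁ π₂).2 ⟨j, hj⟩ = π₂.2 ⟨j - π₁.1, by omega⟩ :=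
  concat_apply_gt _ _ _ h

lemma first_ne (a b a' b' : MCPath (Fin n)) (ha : IsHitting {w} ι a)
    (ha' : IsHitting {w} ι a') (hlt : a.1 < a'.1) (h : concat a b = concat a' b') : False := by
  have hc : (concat a b).1 = a.1 + b.1 := rfl
  have hc' : (concat a' b').1 = a'.1 + b'.1 := rfl
  have hlen : a.1 + b.1 = a'.1 + b'.1 := by rw [← hc, ← hc', h]
  have hj : a.1 < a.1 + b.1 + 1 := by omega
  have hj2 : a.1 < a'.1 + b'.1 + 1 := by omega
  have happ := sigma_apply_eq h a.1 hj
  have hleft : (concat a b).2 ⟨a.1, hj⟩ = w := by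
    rw [concat_apply_le' a b a.1 hj (le_refl _)]
    have hm := ha.2.1
    rw [Set.mem_singleton_iff] at hm
    exact (congrArg a.2 (Fin.ext rfl)).trans hm
  have hright : (concat a' b').2 ⟨a.1, hj2⟩ ≠ w := by
    rw [concat_apply_le' a' b' a.1 hj2 (le_of_lt hlt)]
    intro he
    apply ha'.2.2 ⟨a.1, hlt⟩
    rw [Set.mem_singleton_iff]
    exact (congrArg a'.2 (Fin.ext rfl)).trans he
  exact hright (happ.symm.trans hleft)

lemma concat_inj (a b a' b' : MCPath (Fin n)) (ha : IsHitting {w} ι a)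
    (hb : IsHitting T w b) (ha' : IsHitting {w} ι a') (hb' : IsHitting T w b')
    (h : concat a b = concat a' b') : a = a' ∧ b = b' := by
  have hc : (concat a b).1 = a.1 + b.1 := rfl
  have hc' : (concat a' b').1 = a'.1 + b'.1 := rfl
  have hlen : a.1 + b.1 = a'.1 + b'.1 := by rw [← hc, ← hc', h]
  have haa : a.1 = a'.1 := by
    rcases Nat.lt_trichotomy a.1 a'.1 with hlt | he | hgt
    · exact (first_ne ι w a b a' b' ha ha' hlt h).elim
    · exact he
    · exact (first_ne ι w a' b' a b ha' ha hgt h.symm).elim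
  have hbb : b.1 = b'.1 := by omega
  constructor
  · refine Sigma.ext haa ?_
    refine (Fin.heq_fun_iff (by rw [haa])).mpr ?_
    intro i
    have hi : (i : ℕ) < a.1 + 1 := i.isLt
    have hj : (i : ℕ) < a.1 + b.1 + 1 := by omega
    have hj2 : (i : ℕ) < a'.1 + b'.1 + 1 := by omega
    have h1 : (concat a b).2 ⟨(i : ℕ), hj⟩ = a.2 i := by
      rw [concat_apply_le' a b (i : ℕ) hj (by omega)]
    have h2 : (concat a' b').2 ⟨(i : ℕ), hj2⟩ = a'.2 (Fin.cast (by rw [haa]) i) := by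
      rw [concat_apply_le' a' b' (i : ℕ) hj2 (by omega)]
      exact congrArg a'.2 (Fin.ext rfl)
    exact h1.symm.trans ((sigma_apply_eq h (i : ℕ) hj).trans h2)
  · refine Sigma.ext hbb ?_
    refine (Fin.heq_fun_iff (by rw [hbb])).mpr ?_
    intro i
    have hi : (i : ℕ) < b.1 + 1 := i.isLt
    by_cases hi0 : (i : ℕ) = 0
    · refine ((congrArg b.2 (show i = 0 from Fin.ext (by simp [hi0]))).trans hb.1).trans ?_
      exact hb'.1.symm.trans (congrArg b'.2 (Fin.ext (by simp [hi0])))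
    · have hj : a.1 + (i : ℕ) < a.1 + b.1 + 1 := by omega
      have hj2 : a.1 + (i : ℕ) < a'.1 + b'.1 + 1 := by omega
      have h1 : (concat a b).2 ⟨a.1 + (i : ℕ), hj⟩ = b.2 i := by
        rw [concat_apply_gt' a b _ hj (by omega)]
        exact congrArg b.2 (Fin.ext (by simp))
      have h2 : (concat a' b').2 ⟨a.1 + (i : ℕ), hj2⟩ = b'.2 (Fin.cast (by rw [hbb]) i) := by
        rw [concat_apply_gt' a' b' _ hj2 (by omega)]
        exact congrArg b'.2 (Fin.ext (by simp; omega))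
      exact h1.symm.trans ((sigma_apply_eq h _ hj).trans h2)

end Main

end MCAux

theorem reachProb_mul_of_unavoidable {n : ℕ} (ι : Fin n) (P : Fin n → Fin n → ℝ)
    (hpos : ∀ s s', 0 ≤ P s s') (hrow : ∀ s, ∑ s', P s s' = 1)
    (T : Set (Fin n)) (w : Fin n) (hw : w ∉ T)
    (hthrough : ∀ π : MCPath (Fin n), IsHitting T ι π → pathMass P π ≠ 0 →
      ∃ i : Fin (π.1 + 1), π.2 i = w) :
    reachProb P T ι = reachProb P {w} ι * reachProb P T w := by
  classical
  have hA : ∀ (a : MCPath (Fin n)), IsHitting {w} ι a → pathMass P a ≠ 0 →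
      ∀ j : Fin (a.1 + 1), a.2 j ∉ T := MCAux.avoid_aux ι P T w hw hthrough
  rw [MCAux.reachProb_eq P hpos T ι, MCAux.reachProb_eq P hpos {w} ι,
      MCAux.reachProb_eq P hpos T w, ← ENNReal.toReal_mul]
  congr 1
  have hprod : (∑' a : {π : MCPath (Fin n) // IsHitting {w} ι π}, MCAux.emass P a.1) *
      (∑' b : {π : MCPath (Fin n) // IsHitting T w π}, MCAux.emass P b.1)
      = ∑' q : {π : MCPath (Fin n) // IsHitting {w} ι π} ×
          {π : MCPath (Fin n) // IsHitting T w π},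
          MCAux.emass P q.1.1 * MCAux.emass P q.2.1 := by
    calc (∑' a : {π : MCPath (Fin n) // IsHitting {w} ι π}, MCAux.emass P a.1) *
        (∑' b : {π : MCPath (Fin n) // IsHitting T w π}, MCAux.emass P b.1)
        = ∑' a : {π : MCPath (Fin n) // IsHitting {w} ι π},
            MCAux.emass P a.1 * ∑' b : {π : MCPath (Fin n) // IsHitting T w π},
            MCAux.emass P b.1 := (ENNReal.tsum_mul_right).symm
      _ = ∑' (a : {π : MCPath (Fin n) // IsHitting {w} ι π})
            (b : {π : MCPath (Fin n) // IsHitting T w π}),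
            MCAux.emass P a.1 * MCAux.emass P b.1 :=
          tsum_congr fun a => (ENNReal.tsum_mul_left).symm
      _ = _ := (ENNReal.tsum_prod).symm
  rw [hprod]
  have hmk : ∀ (x : {π : MCPath (Fin n) // IsHitting {w} ι π} ×
      {π : MCPath (Fin n) // IsHitting T w π}),
      MCAux.emass P x.1.1 * MCAux.emass P x.2.1 ≠ 0 → IsHitting T ι (MCAux.concat x.1.1 x.2.1) := by
    intro x hx
    have hxa : pathMass P x.1.1 ≠ 0 :=
      (MCAux.emass_ne_zero_iff P hpos _).mp (left_ne_zero_of_mul hx)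
    exact MCAux.concat_hitting ι T w hw x.1.1 x.2.1 x.1.2 x.2.2 (hA x.1.1 x.1.2 hxa)
  refine tsum_eq_tsum_of_ne_zero_bij
    (fun x : Function.support (fun q : {π : MCPath (Fin n) // IsHitting {w} ι π} ×
        {π : MCPath (Fin n) // IsHitting T w π} =>
        MCAux.emass P q.1.1 * MCAux.emass P q.2.1) =>
      (⟨MCAux.concat x.1.1.1 x.1.2.1, hmk x.1 x.2⟩ : {π : MCPath (Fin n) // IsHitting T ι π}))
    ?_ ?_ ?_
  · intro x y hxy
    have hcc : MCAux.concat x.1.1.1 x.1.2.1 = MCAux.concat y.1.1.1 y.1.2.1 :=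
      congrArg Subtype.val hxy
    obtain ⟨h1, h2⟩ := MCAux.concat_inj ι T w x.1.1.1 x.1.2.1 y.1.1.1 y.1.2.1
      x.1.1.2 x.1.2.2 y.1.1.2 y.1.2.2 hcc
    exact Subtype.ext (Prod.ext (Subtype.ext h1) (Subtype.ext h2))
  · intro π hπ
    have hmass : pathMass P π.1 ≠ 0 := (MCAux.emass_ne_zero_iff P hpos _).mp hπ
    obtain ⟨k, hk, hta, htb⟩ := MCAux.exists_split ι T w π.1 π.2 (hthrough π.1 π.2 hmass)
    have hma : MCAux.emass P (MCAux.take π.1 k hk) ≠ 0 :=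
      (MCAux.emass_ne_zero_iff P hpos _).mpr (MCAux.pathMass_take_ne_zero P π.1 hmass k hk)
    have hmb : MCAux.emass P (MCAux.drop π.1 k hk) ≠ 0 :=
      (MCAux.emass_ne_zero_iff P hpos _).mpr (MCAux.pathMass_drop_ne_zero P π.1 hmass k hk)
    refine ⟨⟨(⟨MCAux.take π.1 k hk, hta⟩, ⟨MCAux.drop π.1 k hk, htb⟩), mul_ne_zero hma hmb⟩, ?_⟩
    exact Subtype.ext (MCAux.concat_take_drop π.1 k hk)
  · intro x
    have hja := x.1.1.2.2.1
    rw [Set.mem_singleton_iff] at hja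
    exact MCAux.emass_concat P x.1.1.1 x.1.2.1 (hja.trans x.1.2.2.1.symm)
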